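/- Under the assumptions of the Arnoldi-OR error bound, if additionally A is diagonalizable as A = V Λ V^{-1} with Λ = diag(λ_1,...,λ_n), then ‖R(A)b − x_k‖_2 / ‖b‖_2 ≤ κ(S)^{1/2} κ(V) · min over polynomials p of degree ≤ k−1 of max_i |R(λ_i) − p(λ_i)|. -/

import Mathlib

/-- The Krylov space `K_k(A,b) = span{b, Ab, ..., A^{k-1}b}`. -/
noncomputable def Krylov (n : ℕ) (A : Matrix (Fin n) (Fin n) ℂ) (b : EuclideanSpace ℂ (Fin n))
    (k : ℕ) : Submodule ℂ (EuclideanSpace ℂ (Fin n)) :=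
  Submodule.span ℂ {x | ∃ i < k, x = (A ^ i).mulVec b}

/-- The `S`-norm `‖v‖_S = ⟨v, S v⟩^{1/2}` for a matrix `S`. -/
noncomputable def Snorm (n : ℕ) (S : Matrix (Fin n) (Fin n) ℂ)
    (v : EuclideanSpace ℂ (Fin n)) : ℝ :=
  Real.sqrt (@inner ℂ (EuclideanSpace ℂ (Fin n)) _ v (WithLp.toLp 2 (S.mulVec v))).re

/-- The operator 2-norm of a matrix. -/
noncomputable def opNorm {m : ℕ} (M : Matrix (Fin m) (Fin m) ℂ) : ℝ :=
  ‖Matrix.toEuclideanCLM (𝕜 := ℂ) M‖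

open Polynomial Matrix

/-- Conjugation by a unit as an algebra homomorphism. -/
def conjAH {R A : Type*} [CommSemiring R] [Semiring A] [Algebra R A] (u : Aˣ) : A →ₐ[R] A where
  toFun x := ↑u * x * ↑u⁻¹
  map_one' := by simp
  map_mul' x y := by
    have h : (↑u⁻¹ : A) * ↑u = 1 := u.inv_mul
    calc ↑u * (x * y) * ↑u⁻¹ = (↑u * x) * ((↑u⁻¹ * ↑u) * (y * ↑u⁻¹)) := by
          rw [h, one_mul]; noncomm_ring
      _ = (↑u * x * ↑u⁻¹) * (↑u * y * ↑u⁻¹) := by noncomm_ring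
  map_zero' := by simp
  map_add' x y := by simp [mul_add, add_mul]
  commutes' r := by
    show ↑u * algebraMap R A r * ↑u⁻¹ = algebraMap R A r
    rw [← Algebra.commutes, mul_assoc, Units.mul_inv, mul_one]

/-- `diagonal` as an algebra homomorphism. -/
def diagAH (n : Type*) (R : Type*) [Fintype n] [DecidableEq n] [CommSemiring R] :
    (n → R) →ₐ[R] Matrix n n R :=
  { Matrix.diagonalRingHom n R with commutes' := fun _ => rfl }

theorem aeval_diagonal' (n : ℕ) (lam : Fin n → ℂ) (q : ℂ[X]) :
    aeval (Matrix.diagonal lam) q = Matrix.diagonal (fun i => q.eval (lam i)) := by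
  have h := aeval_algHom_apply (diagAH (Fin n) ℂ) lam q
  have h2 : (aeval lam) q = fun i => q.eval (lam i) := by
    funext i
    have := aeval_algHom_apply (Pi.evalAlgHom ℂ (fun _ => ℂ) i) lam q
    simp only [Pi.evalAlgHom_apply] at this
    rw [← this, aeval_def, eval, eval₂_eq_sum, eval₂_eq_sum]
    rfl
  rw [h2] at h
  exact h

theorem aeval_conj' {n : ℕ} (u : (Matrix (Fin n) (Fin n) ℂ)ˣ) (d : Matrix (Fin n) (Fin n) ℂ)
    (q : ℂ[X]) : aeval ((u : Matrix (Fin n) (Fin n) ℂ) * d * (↑u⁻¹ : Matrix (Fin n) (Fin n) ℂ)) q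
      = (u : Matrix (Fin n) (Fin n) ℂ) * aeval d q * (↑u⁻¹ : Matrix (Fin n) (Fin n) ℂ) :=
  aeval_algHom_apply (conjAH u) d q

theorem snorm_eq_norm (n : ℕ) (M : Matrix (Fin n) (Fin n) ℂ) (v : EuclideanSpace ℂ (Fin n)) :
    Snorm n (Mᴴ * M) v = ‖Matrix.toEuclideanCLM (𝕜 := ℂ) M v‖ := by
  unfold Snorm
  have hv : (WithLp.toLp 2 ((Mᴴ * M).mulVec (v : Fin n → ℂ)) : EuclideanSpace ℂ (Fin n))
      = Matrix.toEuclideanCLM (𝕜 := ℂ) (Mᴴ * M) v := rfl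
  rw [hv, ← Matrix.star_eq_conjTranspose, _root_.map_mul, map_star]
  have h2 : (star (Matrix.toEuclideanCLM (𝕜 := ℂ) M) * Matrix.toEuclideanCLM (𝕜 := ℂ) M) v
      = ContinuousLinearMap.adjoint (Matrix.toEuclideanCLM (𝕜 := ℂ) M)
          (Matrix.toEuclideanCLM (𝕜 := ℂ) M v) := rfl
  rw [h2, ContinuousLinearMap.adjoint_inner_right, ← RCLike.re_to_complex,
    inner_self_eq_norm_sq]
  exact Real.sqrt_sq (norm_nonneg _)

theorem diag_opNorm_le (n : ℕ) (d : Fin n → ℂ) :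
    ‖Matrix.toEuclideanCLM (𝕜 := ℂ) (Matrix.diagonal d)‖ ≤ ⨆ i, ‖d i‖ := by
  set C := ⨆ i, ‖d i‖ with hC
  have hC0 : 0 ≤ C := Real.iSup_nonneg (fun i => norm_nonneg _)
  refine ContinuousLinearMap.opNorm_le_bound _ hC0 (fun x => ?_)
  have hdi : ∀ i, ‖d i‖ ≤ C :=
    fun i => le_ciSup (f := fun i => ‖d i‖)
      (Set.Finite.bddAbove (Set.finite_range _)) i
  rw [EuclideanSpace.norm_eq, EuclideanSpace.norm_eq,
    ← Real.sqrt_sq hC0, ← Real.sqrt_mul (by positivity)]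
  apply Real.sqrt_le_sqrt
  rw [Finset.mul_sum]
  apply Finset.sum_le_sum
  intro i _
  have h1 : (Matrix.toEuclideanCLM (𝕜 := ℂ) (Matrix.diagonal d) x) i = d i * x i := by
    show (Matrix.diagonal d).mulVec (x : Fin n → ℂ) i = d i * x i
    rw [Matrix.mulVec_diagonal]
  rw [h1, norm_mul, mul_pow]
  gcongr
  exact hdi i

/-- `mulVec` by a fixed vector, as a linear map in the matrix. -/
noncomputable def mulVecByL (n : ℕ) (b : EuclideanSpace ℂ (Fin n)) :
    Matrix (Fin n) (Fin n) ℂ →ₗ[ℂ] EuclideanSpace ℂ (Fin n) where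
  toFun M := (WithLp.equiv 2 (Fin n → ℂ)).symm (M.mulVec b)
  map_add' M M' := by
    simp only [Matrix.add_mulVec]
    rfl
  map_smul' c M := by
    simp only [Matrix.smul_mulVec, RingHom.id_apply]
    rfl

theorem aeval_mem_Krylov (n k : ℕ) (A : Matrix (Fin n) (Fin n) ℂ)
    (b : EuclideanSpace ℂ (Fin n)) (p : ℂ[X]) (hp : p.degree < (k : WithBot ℕ)) :
    (WithLp.equiv 2 (Fin n → ℂ)).symm ((aeval A p).mulVec b) ∈ Krylov n A b k := by
  by_cases h0 : p = 0
  · subst h0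
    simp only [map_zero, Matrix.zero_mulVec]
    exact (Krylov n A b k).zero_mem
  · have hnk : p.natDegree < k := (natDegree_lt_iff_degree_lt h0).mpr hp
    have := aeval_eq_sum_range' (x := A) hnk
    rw [this]
    have : (mulVecByL n b) (∑ i ∈ Finset.range k, p.coeff i • A ^ i) ∈ Krylov n A b k := by
      rw [map_sum]
      apply Submodule.sum_mem
      intro i hi
      rw [_root_.map_smul]
      apply Submodule.smul_mem
      apply Submodule.subset_span
      exact ⟨i, Finset.mem_range.mp hi, rfl⟩
    exact this

set_option maxHeartbeats 1000000 in
/-- If additionally `A = V Λ V⁻¹` is diagonalizable, the Arnoldi-OR error satisfies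
`‖R(A)b − x_k‖₂/‖b‖₂ ≤ κ(S)^{1/2} κ(V) · min_{deg p ≤ k-1} max_i |R(λ_i) − p(λ_i)|`. -/
theorem stmt7 (n k : ℕ) (hn : 0 < n) (A : Matrix (Fin n) (Fin n) ℂ)
    (V : Matrix (Fin n) (Fin n) ℂ) (hV : IsUnit V) (lam : Fin n → ℂ)
    (hdiag : A = V * Matrix.diagonal lam * V⁻¹)
    (D N : Polynomial ℂ) (hDlam : ∀ i, D.eval (lam i) ≠ 0) (hD : IsUnit (aeval A D))
    (b : EuclideanSpace ℂ (Fin n)) (hb : b ≠ 0)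
    (xk : EuclideanSpace ℂ (Fin n)) (hmem : xk ∈ Krylov n A b k)
    (hmin : ∀ x ∈ Krylov n A b k,
      Snorm n ((aeval A D)ᴴ * aeval A D)
        ((WithLp.equiv 2 (Fin n → ℂ)).symm (((aeval A D)⁻¹ * aeval A N).mulVec b) - xk)
      ≤ Snorm n ((aeval A D)ᴴ * aeval A D)
        ((WithLp.equiv 2 (Fin n → ℂ)).symm (((aeval A D)⁻¹ * aeval A N).mulVec b) - x)) :
    ∀ p : Polynomial ℂ, p.degree < (k : WithBot ℕ) →
      ‖((WithLp.equiv 2 (Fin n → ℂ)).symm (((aeval A D)⁻¹ * aeval A N).mulVec b) - xk :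
          EuclideanSpace ℂ (Fin n))‖ / ‖b‖
      ≤ Real.sqrt (opNorm ((aeval A D)ᴴ * aeval A D) * opNorm (((aeval A D)ᴴ * aeval A D)⁻¹))
        * (opNorm V * opNorm V⁻¹)
        * ⨆ i : Fin n, ‖N.eval (lam i) / D.eval (lam i) - p.eval (lam i)‖ := by
  intro p hp
  set T := Matrix.toEuclideanCLM (n := Fin n) (𝕜 := ℂ) with hT
  -- basic unit facts
  have hVdet : IsUnit V.det := (Matrix.isUnit_iff_isUnit_det V).mp hV
  have hVV : V * V⁻¹ = 1 := Matrix.mul_nonsing_inv V hVdet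
  have hVV' : V⁻¹ * V = 1 := Matrix.nonsing_inv_mul V hVdet
  have hconj : ∀ X Y : Matrix (Fin n) (Fin n) ℂ,
      (V * X * V⁻¹) * (V * Y * V⁻¹) = V * (X * Y) * V⁻¹ := by
    intro X Y
    calc (V * X * V⁻¹) * (V * Y * V⁻¹) = V * X * (V⁻¹ * V) * (Y * V⁻¹) := by
          noncomm_ring
      _ = V * (X * Y) * V⁻¹ := by rw [hVV']; noncomm_ring
  -- diagonalization of aeval
  have hq : ∀ q : ℂ[X], aeval A q = V * Matrix.diagonal (fun i => q.eval (lam i)) * V⁻¹ := by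
    intro q
    obtain ⟨u, hu⟩ := hV
    have huinv : (↑u⁻¹ : Matrix (Fin n) (Fin n) ℂ) = V⁻¹ := by
      rw [Matrix.coe_units_inv, hu]
    rw [hdiag, ← huinv, ← hu, aeval_conj', aeval_diagonal']
  -- inverse of D(A)
  have hDinv : (aeval A D)⁻¹
      = V * Matrix.diagonal (fun i => (D.eval (lam i))⁻¹) * V⁻¹ := by
    apply Matrix.inv_eq_right_inv
    rw [hq D, hconj, Matrix.diagonal_mul_diagonal]
    have : (fun i => D.eval (lam i) * (D.eval (lam i))⁻¹) = fun _ => (1 : ℂ) := by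
      funext i; exact mul_inv_cancel₀ (hDlam i)
    rw [this, Matrix.diagonal_one, mul_one, hVV]
  -- the matrix R(A) - p(A)
  set g : Fin n → ℂ := fun i => N.eval (lam i) / D.eval (lam i) - p.eval (lam i) with hg
  have hRmP : (aeval A D)⁻¹ * aeval A N - aeval A p = V * Matrix.diagonal g * V⁻¹ := by
    rw [hDinv, hq N, hq p, hconj, Matrix.diagonal_mul_diagonal, ← Matrix.sub_mul,
      ← Matrix.mul_sub, Matrix.diagonal_sub]
    have hfun : (fun i => (D.eval (lam i))⁻¹ * N.eval (lam i) - p.eval (lam i)) = g := by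
      funext i
      simp only [hg]
      rw [div_eq_mul_inv, mul_comm]
    rw [hfun]
  -- notation
  set RA := (aeval A D)⁻¹ * aeval A N with hRA
  set r := (WithLp.equiv 2 (Fin n → ℂ)).symm (RA.mulVec b) with hr
  set xp := (WithLp.equiv 2 (Fin n → ℂ)).symm ((aeval A p).mulVec b) with hxp
  have hxpmem : xp ∈ Krylov n A b k := aeval_mem_Krylov n k A b p hp
  set w : EuclideanSpace ℂ (Fin n) := r - xp with hwdef
  have hw : w = T (V * Matrix.diagonal g * V⁻¹) b := by
    rw [hwdef, hr, hxp, ← hRmP]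
    show _ = (WithLp.equiv 2 (Fin n → ℂ)).symm
      ((RA - aeval A p).mulVec ((WithLp.equiv 2 (Fin n → ℂ)) b))
    rw [Matrix.sub_mulVec]
    rfl
  set e : EuclideanSpace ℂ (Fin n) := r - xk with hedef
  set M := aeval A D with hM
  have hMdet : IsUnit M.det := (Matrix.isUnit_iff_isUnit_det M).mp hD
  have hMM : M⁻¹ * M = 1 := Matrix.nonsing_inv_mul M hMdet
  -- step 1 : ‖e‖ ≤ ‖T M⁻¹‖ * ‖T M e‖
  have h1 : ‖e‖ ≤ ‖T M⁻¹‖ * ‖T M e‖ := by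
    have he : e = T M⁻¹ (T M e) := by
      have : T M⁻¹ (T M e) = (T M⁻¹ * T M) e := rfl
      rw [this, ← _root_.map_mul, hMM, _root_.map_one, ContinuousLinearMap.one_apply]
    calc ‖e‖ = ‖T M⁻¹ (T M e)‖ := by rw [← he]
      _ ≤ ‖T M⁻¹‖ * ‖T M e‖ := (T M⁻¹).le_opNorm _
  -- step 2 : minimality
  have h2 : ‖T M e‖ ≤ ‖T M w‖ := by
    have h2' := hmin xp hxpmem
    rw [← hwdef, snorm_eq_norm, snorm_eq_norm, ← hT] at h2'
    exact h2'
  -- step 3 : bound ‖T M w‖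
  have h3 : ‖T M w‖ ≤ ‖T M‖ * ‖w‖ := (T M).le_opNorm _
  -- step 4 : bound ‖w‖
  set C := ⨆ i : Fin n, ‖g i‖ with hCdef
  have hC0 : 0 ≤ C := Real.iSup_nonneg (fun i => norm_nonneg _)
  have hdg : ‖T (Matrix.diagonal g)‖ ≤ C := diag_opNorm_le n g
  have h4 : ‖w‖ ≤ ‖T V‖ * (C * (‖T V⁻¹‖ * ‖b‖)) := by
    have hsplit : T (V * Matrix.diagonal g * V⁻¹) b
        = T V (T (Matrix.diagonal g) (T V⁻¹ b)) := by
      rw [_root_.map_mul, _root_.map_mul]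
      rfl
    rw [hw, hsplit]
    calc ‖T V (T (Matrix.diagonal g) (T V⁻¹ b))‖
        ≤ ‖T V‖ * ‖T (Matrix.diagonal g) (T V⁻¹ b)‖ := (T V).le_opNorm _
      _ ≤ ‖T V‖ * (C * (‖T V⁻¹‖ * ‖b‖)) := by
          gcongr
          calc ‖T (Matrix.diagonal g) (T V⁻¹ b)‖
              ≤ ‖T (Matrix.diagonal g)‖ * ‖T V⁻¹ b‖ := (T _).le_opNorm _
            _ ≤ C * (‖T V⁻¹‖ * ‖b‖) := by
                apply mul_le_mul hdg ((T V⁻¹).le_opNorm _) (norm_nonneg _) hC0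
  -- sqrt of condition number
  have hcstar : ∀ f : EuclideanSpace ℂ (Fin n) →L[ℂ] EuclideanSpace ℂ (Fin n),
      ‖star f * f‖ = ‖f‖ * ‖f‖ := by
    intro f
    rw [ContinuousLinearMap.star_eq_adjoint]
    exact ContinuousLinearMap.norm_adjoint_comp_self f
  have hnormstar : ∀ f : EuclideanSpace ℂ (Fin n) →L[ℂ] EuclideanSpace ℂ (Fin n),
      ‖star f‖ = ‖f‖ := by
    intro f
    rw [ContinuousLinearMap.star_eq_adjoint]
    exact ContinuousLinearMap.adjoint.norm_map f
  have hS : opNorm (Mᴴ * M) = ‖T M‖ * ‖T M‖ := by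
    unfold opNorm
    rw [← Matrix.star_eq_conjTranspose, _root_.map_mul, map_star]
    exact hcstar (T M)
  have hSinv : opNorm ((Mᴴ * M)⁻¹) = ‖T M⁻¹‖ * ‖T M⁻¹‖ := by
    unfold opNorm
    rw [Matrix.mul_inv_rev, ← Matrix.conjTranspose_nonsing_inv,
      ← Matrix.star_eq_conjTranspose, _root_.map_mul, map_star]
    calc ‖T M⁻¹ * star (T M⁻¹)‖ = ‖star (star (T M⁻¹)) * star (T M⁻¹)‖ := by rw [star_star]
      _ = ‖star (T M⁻¹)‖ * ‖star (T M⁻¹)‖ := hcstar _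
      _ = ‖T M⁻¹‖ * ‖T M⁻¹‖ := by rw [hnormstar]
  have hsqrt : Real.sqrt (opNorm (Mᴴ * M) * opNorm ((Mᴴ * M)⁻¹)) = ‖T M‖ * ‖T M⁻¹‖ := by
    rw [hS, hSinv, show ‖T M‖ * ‖T M‖ * (‖T M⁻¹‖ * ‖T M⁻¹‖)
      = (‖T M‖ * ‖T M⁻¹‖) * (‖T M‖ * ‖T M⁻¹‖) by ring]
    exact Real.sqrt_mul_self (by positivity)
  -- finish
  have hb0 : (0:ℝ) < ‖b‖ := norm_pos_iff.mpr hb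
  rw [div_le_iff₀ hb0]
  have hchain : ‖e‖ ≤ ‖T M⁻¹‖ * (‖T M‖ * (‖T V‖ * (C * (‖T V⁻¹‖ * ‖b‖)))) := by
    calc ‖e‖ ≤ ‖T M⁻¹‖ * ‖T M e‖ := h1
      _ ≤ ‖T M⁻¹‖ * ‖T M w‖ := mul_le_mul_of_nonneg_left h2 (norm_nonneg _)
      _ ≤ ‖T M⁻¹‖ * (‖T M‖ * ‖w‖) := mul_le_mul_of_nonneg_left h3 (norm_nonneg _)
      _ ≤ ‖T M⁻¹‖ * (‖T M‖ * (‖T V‖ * (C * (‖T V⁻¹‖ * ‖b‖)))) :=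
          mul_le_mul_of_nonneg_left (mul_le_mul_of_nonneg_left h4 (norm_nonneg _))
            (norm_nonneg _)
  calc ‖e‖ ≤ ‖T M⁻¹‖ * (‖T M‖ * (‖T V‖ * (C * (‖T V⁻¹‖ * ‖b‖)))) := hchain
    _ = Real.sqrt (opNorm (Mᴴ * M) * opNorm ((Mᴴ * M)⁻¹)) * (opNorm V * opNorm V⁻¹) * C * ‖b‖ := by
        rw [hsqrt]
        show _ = ‖T M‖ * ‖T M⁻¹‖ * (‖T V‖ * ‖T V⁻¹‖) * C * ‖b‖
        ring
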